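/- Let f : ℝⁿ → ℝⁿ be nonexpansive (1-Lipschitz), and let ρ : ℝⁿ → ℝ be differentiable with ∇ρ(x) = x − f(x) for every x. Then ρ is a convex function. -/
import Mathlib

open scoped RealInnerProductSpace

/-- If `f` is nonexpansive and `ρ` is differentiable with
`∇ρ(x) = x - f x` for all `x`, then `ρ` is convex. -/
theorem convex_of_gradient_id_sub_nonexpansive {n : ℕ}
    (f : EuclideanSpace ℝ (Fin n) → EuclideanSpace ℝ (Fin n))
    (hf : LipschitzWith 1 f)
    (ρ : EuclideanSpace ℝ (Fin n) → ℝ)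
    (hρ : ∀ x : EuclideanSpace ℝ (Fin n), HasGradientAt ρ (x - f x) x) :
    ConvexOn ℝ Set.univ ρ := by
  -- key monotonicity of the gradient
  have key : ∀ u v : EuclideanSpace ℝ (Fin n),
      0 ≤ ⟪(u - f u) - (v - f v), u - v⟫ := by
    intro u v
    have h1 : ⟪(u - f u) - (v - f v), u - v⟫
        = ‖u - v‖ ^ 2 - ⟪f u - f v, u - v⟫ := by
      rw [sub_sub_sub_comm, inner_sub_left, real_inner_self_eq_norm_sq]
    have h2 : ⟪f u - f v, u - v⟫ ≤ ‖u - v‖ ^ 2 := by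
      calc ⟪f u - f v, u - v⟫ ≤ ‖f u - f v‖ * ‖u - v‖ := real_inner_le_norm _ _
        _ ≤ ‖u - v‖ * ‖u - v‖ := by
            have := hf.dist_le_mul u v
            simp only [NNReal.coe_one, one_mul, dist_eq_norm] at this
            exact mul_le_mul_of_nonneg_right this (norm_nonneg _)
        _ = ‖u - v‖ ^ 2 := by ring
    linarith
  rw [convexOn_iff_forall_pos]
  refine ⟨convex_univ, fun x _ y _ a b ha hb hab => ?_⟩
  set v : EuclideanSpace ℝ (Fin n) := y - x with hv
  set g : ℝ → ℝ := fun t => ρ (x + t • v) with hg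
  have hL : ∀ t : ℝ, HasDerivAt (fun t : ℝ => x + t • v) v t := fun t => by
    simpa using ((hasDerivAt_id t).smul_const v).const_add x
  have hd : ∀ t : ℝ, HasDerivAt g ⟪(x + t • v) - f (x + t • v), v⟫ t := by
    intro t
    have h := ((hρ (x + t • v)).hasFDerivAt.comp_hasDerivAt t (hL t))
    have h2 : HasDerivAt g
        ((InnerProductSpace.toDual ℝ _ ((x + t • v) - f (x + t • v))) v) t := h
    rwa [InnerProductSpace.toDual_apply_apply] at h2
  have hgderiv : deriv g = fun t => ⟪(x + t • v) - f (x + t • v), v⟫ :=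
    funext fun t => (hd t).deriv
  have hgdiff : Differentiable ℝ g := fun t => (hd t).differentiableAt
  have hmono : Monotone (deriv g) := by
    rw [hgderiv]
    intro s t hst
    dsimp only
    have h := key (x + t • v) (x + s • v)
    have hz : (x + t • v) - (x + s • v) = (t - s) • v := by
      rw [add_sub_add_left_eq_sub, ← sub_smul]
    rw [hz, real_inner_smul_right, inner_sub_left] at h
    rcases hst.eq_or_lt with rfl | hlt
    · exact le_rfl
    · nlinarith
  have hgconv : ConvexOn ℝ Set.univ g := hmono.convexOn_univ_of_deriv hgdiff
  have h2 := hgconv.2 (Set.mem_univ (0:ℝ)) (Set.mem_univ (1:ℝ)) ha.le hb.le hab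
  have e0 : g 0 = ρ x := by simp [hg]
  have e1 : g 1 = ρ y := by simp [hg, hv]
  have hxy : x + b • v = a • x + b • y := by
    have hba : a = 1 - b := by linarith
    rw [hba, hv]; module
  have hb' : a • (0:ℝ) + b • (1:ℝ) = b := by simp
  rw [hb', e0, e1] at h2
  have e2 : g b = ρ (a • x + b • y) := by rw [hg]; dsimp only; rw [hxy]
  rw [e2] at h2
  simpa using h2
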